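/- Suppose F₂ is atomless conditionally to F₁. Then for every F₁-measurable function h : Ω → [0, 1] there exists a set B_h ∈ F₂ such that E[1_{B_h} | F₁] = h almost surely. -/

import Mathlib

open MeasureTheory
open Set Filter Topology

/-- `F₂` is atomless conditionally to `F₁`: for every `A ∈ F₂` there is `B ∈ F₂`, `B ⊆ A`,
with `0 < E[1_B | F₁] < E[1_A | F₁]` almost surely on the set `{E[1_A | F₁] > 0}`. -/
def CondAtomless {Ω : Type*} (m1 m2 : MeasurableSpace Ω) (μ : @Measure Ω m2) : Prop :=
  ∀ A : Set Ω, MeasurableSet[m2] A →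
    ∃ B : Set Ω, MeasurableSet[m2] B ∧ B ⊆ A ∧
      ∀ᵐ ω ∂μ, 0 < (μ[A.indicator (fun _ => (1 : ℝ)) | m1]) ω →
        0 < (μ[B.indicator (fun _ => (1 : ℝ)) | m1]) ω ∧
        (μ[B.indicator (fun _ => (1 : ℝ)) | m1]) ω <
          (μ[A.indicator (fun _ => (1 : ℝ)) | m1]) ω

namespace CondAtomlessAux

variable {Ω : Type*} {m1 m2 : MeasurableSpace Ω}

/-- conditional expectation of an indicator -/
noncomputable def ce (m1 : MeasurableSpace Ω) {m2 : MeasurableSpace Ω}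
    (μ : @Measure Ω m2) (B : Set Ω) : Ω → ℝ :=
  μ[B.indicator (fun _ => (1 : ℝ)) | m1]

variable (hm : m1 ≤ m2) {μ : @Measure Ω m2} [IsProbabilityMeasure μ]

set_option linter.unusedSectionVars false

include hm

lemma sft : SigmaFinite (μ.trim hm) := by
  haveI := isFiniteMeasure_trim hm (μ := μ)
  infer_instance

lemma indInt {B : Set Ω} (hB : MeasurableSet[m2] B) :
    Integrable (B.indicator fun _ => (1 : ℝ)) μ :=
  (integrable_const 1).indicator hB

lemma ce_nonneg (B : Set Ω) : 0 ≤ᵐ[μ] ce m1 μ B :=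
  condExp_nonneg (Eventually.of_forall fun ω => Set.indicator_nonneg (fun _ _ => zero_le_one) ω)

lemma ce_le_one {B : Set Ω} (hB : MeasurableSet[m2] B) :
    ce m1 μ B ≤ᵐ[μ] fun _ => (1 : ℝ) := by
  haveI := sft hm (μ := μ)
  have h1 : μ[(fun _ => (1 : ℝ)) | m1] = fun _ => (1 : ℝ) := condExp_const hm 1
  have := condExp_mono (μ := μ) (m := m1) (indInt hm hB) (integrable_const (1 : ℝ))
    (Eventually.of_forall fun ω => Set.indicator_le_self' (fun _ _ => zero_le_one) ω)
  rwa [h1] at this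

lemma ce_null {B : Set Ω} (h0 : μ B = 0) : ce m1 μ B =ᵐ[μ] 0 := by
  have h1 : B.indicator (fun _ => (1 : ℝ)) =ᵐ[μ] 0 := by
    refine (measure_mono_null ?_ h0 : μ {ω | B.indicator (fun _ => (1:ℝ)) ω ≠ 0} = 0)
    intro ω hω
    by_contra hB
    exact hω (Set.indicator_of_notMem hB _)
  calc ce m1 μ B =ᵐ[μ] μ[(0 : Ω → ℝ) | m1] := condExp_congr_ae h1
    _ = 0 := condExp_zero

lemma ce_union {B C : Set Ω} (hB : MeasurableSet[m2] B) (hC : MeasurableSet[m2] C)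
    (hd : Disjoint B C) : ce m1 μ (B ∪ C) =ᵐ[μ] ce m1 μ B + ce m1 μ C := by
  have h1 : (B ∪ C).indicator (fun _ => (1 : ℝ)) =
      B.indicator (fun _ => (1 : ℝ)) + C.indicator (fun _ => (1 : ℝ)) :=
    Set.indicator_union_of_disjoint hd _
  rw [ce, h1]
  exact condExp_add (indInt hm (μ := μ) hB) (indInt hm (μ := μ) hC) m1

lemma ce_inter_m1 {B T : Set Ω} (hB : MeasurableSet[m2] B) (hT : MeasurableSet[m1] T) :
    ce m1 μ (B ∩ T) =ᵐ[μ] T.indicator (ce m1 μ B) := by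
  have h1 : (B ∩ T).indicator (fun _ => (1 : ℝ)) =
      T.indicator (B.indicator (fun _ => (1 : ℝ))) := by
    rw [Set.indicator_indicator, Set.inter_comm]
  rw [ce, h1]
  exact condExp_indicator (indInt hm hB) hT

lemma ce_compl {B : Set Ω} (hB : MeasurableSet[m2] B) :
    ce m1 μ Bᶜ =ᵐ[μ] fun ω => 1 - ce m1 μ B ω := by
  haveI := sft hm (μ := μ)
  have h1 : Bᶜ.indicator (fun _ => (1 : ℝ)) =
      fun ω => (fun _ => (1:ℝ)) ω - B.indicator (fun _ => (1 : ℝ)) ω := by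
    funext ω
    by_cases hω : ω ∈ B <;> simp [hω]
  rw [ce, h1]
  have h2 := condExp_sub (μ := μ) (m := m1) (integrable_const (1 : ℝ)) (indInt hm hB)
  refine h2.trans ?_
  rw [condExp_const hm (1 : ℝ)]
  rfl

lemma ce_setIntegral {B : Set Ω} (hB : MeasurableSet[m2] B) {T : Set Ω}
    (hT : MeasurableSet[m1] T) :
    ∫ ω in T, ce m1 μ B ω ∂μ = (μ (B ∩ T)).toReal := by
  haveI := sft hm (μ := μ)
  rw [ce, setIntegral_condExp hm (indInt hm hB) hT, setIntegral_indicator hB,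
    Set.inter_comm T B, setIntegral_const, smul_eq_mul, mul_one, Measure.real]

lemma ce_le_of_setIntegral {B : Set Ω} (hB : MeasurableSet[m2] B) {g : Ω → ℝ}
    (hg : StronglyMeasurable[m1] g) (hgint : Integrable g μ)
    (H : ∀ T : Set Ω, MeasurableSet[m1] T → (μ (B ∩ T)).toReal ≤ ∫ ω in T, g ω ∂μ) :
    ce m1 μ B ≤ᵐ[μ] g := by
  haveI := sft hm (μ := μ)
  have hce : StronglyMeasurable[m1] (ce m1 μ B) := stronglyMeasurable_condExp
  have hceint : Integrable (ce m1 μ B) μ := integrable_condExp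
  refine ae_le_of_ae_le_trim (hm := hm) ?_
  refine ae_le_of_forall_setIntegral_le (hceint.trim hm hce) (hgint.trim hm hg) ?_
  intro s hs _
  rw [← setIntegral_trim hm hce hs, ← setIntegral_trim hm hg hs,
    ce_setIntegral hm hB hs]
  exact H s hs

lemma setIntegral_le_of_ce_le {B : Set Ω} (hB : MeasurableSet[m2] B) {g : Ω → ℝ}
    (hgint : Integrable g μ) (hle : ce m1 μ B ≤ᵐ[μ] g)
    {T : Set Ω} (hT : MeasurableSet[m1] T) :
    (μ (B ∩ T)).toReal ≤ ∫ ω in T, g ω ∂μ := by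
  haveI := sft hm (μ := μ)
  rw [← ce_setIntegral hm hB hT]
  exact setIntegral_mono_ae integrable_condExp.integrableOn hgint.integrableOn hle


lemma split (hca : CondAtomless m1 m2 μ) (k : ℕ) :
    ∀ A : Set Ω, MeasurableSet[m2] A → ∃ B : Set Ω, MeasurableSet[m2] B ∧ B ⊆ A ∧
      ∀ᵐ ω ∂μ, 0 < ce m1 μ A ω → 0 < ce m1 μ B ω ∧
        ce m1 μ B ω ≤ (1/2 : ℝ)^k * ce m1 μ A ω := by
  induction k with
  | zero =>
    intro A hA
    exact ⟨A, hA, subset_rfl, Eventually.of_forall fun ω h => ⟨h, by simp⟩⟩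
  | succ k ih =>
    intro A hA
    obtain ⟨B, hB, hBA, hBae⟩ := ih A hA
    obtain ⟨C, hC, hCB, hCae⟩ := hca B hB
    have hCae' : ∀ᵐ ω ∂μ, 0 < ce m1 μ B ω →
        0 < ce m1 μ C ω ∧ ce m1 μ C ω < ce m1 μ B ω := hCae
    set D := B \ C with hD
    have hDmeas : MeasurableSet[m2] D := hB.diff hC
    have hdisj : Disjoint C D := Set.disjoint_sdiff_right
    have hBCD : B = C ∪ D := by rw [hD, Set.union_diff_cancel hCB]
    have hBsum : ce m1 μ B =ᵐ[μ] ce m1 μ C + ce m1 μ D := by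
      rw [hBCD]; exact ce_union hm hC hDmeas hdisj
    set T := {ω | ce m1 μ C ω ≤ ce m1 μ B ω / 2} with hTdef
    have hTmeas : MeasurableSet[m1] T :=
      measurableSet_le (stronglyMeasurable_condExp.measurable)
        ((stronglyMeasurable_condExp.measurable).div_const 2)
    refine ⟨(C ∩ T) ∪ (D ∩ Tᶜ),
      ((hC.inter (hm _ hTmeas)).union (hDmeas.inter (hm _ hTmeas.compl))), ?_, ?_⟩
    · intro ω hω
      rcases hω with hw | hw
      · exact hBA (hCB hw.1)
      · exact hBA hw.1.1
    · have h1 : ce m1 μ ((C ∩ T) ∪ (D ∩ Tᶜ)) =ᵐ[μ] ce m1 μ (C ∩ T) + ce m1 μ (D ∩ Tᶜ) :=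
        ce_union hm (hC.inter (hm _ hTmeas)) (hDmeas.inter (hm _ hTmeas.compl))
          (hdisj.mono Set.inter_subset_left Set.inter_subset_left)
      have h2 := ce_inter_m1 hm (μ := μ) hC hTmeas
      have h3 := ce_inter_m1 hm (μ := μ) hDmeas hTmeas.compl
      filter_upwards [h1, h2, h3, hBsum, hBae, hCae'] with ω e1 e2 e3 e4 e5 e6
      intro hA0
      obtain ⟨hB0, hBle⟩ := e5 hA0
      obtain ⟨hC0, hClt⟩ := e6 hB0
      have hDval : ce m1 μ D ω = ce m1 μ B ω - ce m1 μ C ω := by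
        have e4' : ce m1 μ B ω = ce m1 μ C ω + ce m1 μ D ω := e4
        linarith
      have hpow : (1/2 : ℝ)^(k+1) * ce m1 μ A ω = ((1/2)^k * ce m1 μ A ω) / 2 := by
        rw [pow_succ]; ring
      rw [e1, Pi.add_apply, e2, e3]
      by_cases hωT : ω ∈ T
      · rw [Set.indicator_of_mem hωT, Set.indicator_of_notMem (by simp [hωT])]
        have hle : ce m1 μ C ω ≤ ce m1 μ B ω / 2 := hωT
        exact ⟨by linarith, by linarith⟩
      · rw [Set.indicator_of_notMem hωT, Set.indicator_of_mem (by simp [hωT])]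
        have hgt : ¬ ce m1 μ C ω ≤ ce m1 μ B ω / 2 := hωT
        push_neg at hgt
        rw [hDval]
        exact ⟨by linarith, by linarith⟩


omit hm in
lemma acc_zero {s : ℕ → Set Ω} : Set.accumulate s 0 = s 0 := by
  ext ω; simp [Set.mem_accumulate, Nat.le_zero]

omit hm in
lemma acc_succ {s : ℕ → Set Ω} {n : ℕ} :
    Set.accumulate s (n + 1) = Set.accumulate s n ∪ s (n + 1) := by
  ext ω
  simp only [Set.mem_accumulate, Set.mem_union, Nat.le_succ_iff]
  constructor
  · rintro ⟨y, hy | hy, hmem⟩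
    · exact Or.inl ⟨y, hy, hmem⟩
    · subst hy; exact Or.inr hmem
  · rintro (⟨y, hy, hmem⟩ | hmem)
    · exact ⟨y, Or.inl hy, hmem⟩
    · exact ⟨n + 1, Or.inr rfl, hmem⟩

omit hm in
lemma tri {X Y Z : Set Ω} : X \ Z ⊆ (X \ Y) ∪ (Y \ Z) := by
  rintro ω ⟨h1, h2⟩
  by_cases hY : ω ∈ Y
  · exact Or.inr ⟨hY, h2⟩
  · exact Or.inl ⟨h1, hY⟩

/-- The candidate sets. -/
def Good (m1 : MeasurableSpace Ω) {m2 : MeasurableSpace Ω} (μ : @Measure Ω m2) (h : Ω → ℝ) :=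
  {B : Set Ω // MeasurableSet[m2] B ∧ ce m1 μ B ≤ᵐ[μ] h}

/-- a.e. inclusion. -/
def rel (m1 : MeasurableSpace Ω) {m2 : MeasurableSpace Ω} (μ : @Measure Ω m2) (h : Ω → ℝ) :
    Good m1 μ h → Good m1 μ h → Prop :=
  fun B C => μ (B.1 \ C.1) = 0

omit hm in
lemma rel_trans {h : Ω → ℝ} {a b c : Good m1 μ h}
    (hab : rel m1 μ h a b) (hbc : rel m1 μ h b c) : rel m1 μ h a c :=
  measure_mono_null tri (measure_union_null hab hbc)

lemma good_empty {h : Ω → ℝ} (hh0 : ∀ ω, 0 ≤ h ω) :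
    MeasurableSet[m2] (∅ : Set Ω) ∧ ce m1 μ (∅ : Set Ω) ≤ᵐ[μ] h := by
  refine ⟨MeasurableSet.empty, ?_⟩
  have h0 : (∅ : Set Ω).indicator (fun _ => (1 : ℝ)) = (0 : Ω → ℝ) := by
    ext ω; simp
  rw [ce, h0, condExp_zero]
  exact Eventually.of_forall fun ω => hh0 ω

lemma chain_bound {h : Ω → ℝ} (hh : StronglyMeasurable[m1] h) (hhint : Integrable h μ)
    (hh0 : ∀ ω, 0 ≤ h ω)
    (c : Set (Good m1 μ h)) (hc : IsChain (rel m1 μ h) c) :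
    ∃ ub, ∀ a ∈ c, rel m1 μ h a ub := by
  classical
  by_cases hcn : c.Nonempty
  swap
  · exact ⟨⟨∅, good_empty hm hh0⟩, fun a ha => absurd ⟨a, ha⟩ hcn⟩
  set v : Good m1 μ h → ℝ := fun B => (μ B.1).toReal with hv
  set S : Set ℝ := v '' c with hS
  have hSne : S.Nonempty := hcn.image v
  have hSbdd : BddAbove S := by
    refine ⟨1, fun x hx => ?_⟩
    obtain ⟨B, _, rfl⟩ := hx
    simpa using ENNReal.toReal_mono (by simp) (prob_le_one (μ := μ) (s := B.1))
  obtain ⟨u, humono, hulim, humem⟩ := exists_seq_tendsto_sSup hSne hSbdd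
  have hmem : ∀ n, ∃ B : Good m1 μ h, B ∈ c ∧ v B = u n := fun n => humem n
  choose w hw1 hw2 using hmem
  set U : Set Ω := ⋃ n, (w n).1 with hU
  have hUmeas : MeasurableSet[m2] U := MeasurableSet.iUnion fun n => (w n).2.1
  -- each accumulated union is a.e. contained in a single chain element
  have hacc : ∀ n : ℕ, ∃ j : ℕ,
      μ (Set.accumulate (fun k => (w k).1) n \ (w j).1) = 0 := by
    intro n
    induction n with
    | zero => exact ⟨0, by rw [acc_zero]; simp⟩
    | succ n ihn =>
      obtain ⟨j, hj⟩ := ihn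
      have hcomp : μ ((w j).1 \ (w (n+1)).1) = 0 ∨ μ ((w (n+1)).1 \ (w j).1) = 0 := by
        rcases eq_or_ne (w j) (w (n+1)) with he | hne
        · left; rw [he]; simp
        · exact hc (hw1 j) (hw1 (n+1)) hne
      rcases hcomp with hr | hr
      · refine ⟨n+1, ?_⟩
        rw [acc_succ, Set.union_diff_distrib]
        refine measure_union_null (measure_mono_null ?_ (measure_union_null hj hr)) (by simp)
        exact tri
      · refine ⟨j, ?_⟩
        rw [acc_succ, Set.union_diff_distrib]
        exact measure_union_null hj hr
  have hPU : MeasurableSet[m2] U ∧ ce m1 μ U ≤ᵐ[μ] h := by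
    refine ⟨hUmeas, ce_le_of_setIntegral hm hUmeas hh hhint ?_⟩
    intro T hT
    have hint_nonneg : 0 ≤ ∫ ω in T, h ω ∂μ :=
      setIntegral_nonneg (hm _ hT) fun ω _ => hh0 ω
    have key : ∀ n : ℕ, μ (Set.accumulate (fun k => (w k).1) n ∩ T) ≤
        ENNReal.ofReal (∫ ω in T, h ω ∂μ) := by
      intro n
      obtain ⟨j, hj⟩ := hacc n
      have hsub : Set.accumulate (fun k => (w k).1) n ∩ T ⊆
          ((w j).1 ∩ T) ∪ (Set.accumulate (fun k => (w k).1) n \ (w j).1) := by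
        rintro ω ⟨h1, h2⟩
        by_cases hωj : ω ∈ (w j).1
        · exact Or.inl ⟨hωj, h2⟩
        · exact Or.inr ⟨h1, hωj⟩
      calc μ (Set.accumulate (fun k => (w k).1) n ∩ T)
          ≤ μ ((w j).1 ∩ T) + μ (Set.accumulate (fun k => (w k).1) n \ (w j).1) :=
            (measure_mono hsub).trans (measure_union_le _ _)
        _ = μ ((w j).1 ∩ T) := by rw [hj, add_zero]
        _ ≤ ENNReal.ofReal (∫ ω in T, h ω ∂μ) := by
            rw [ENNReal.le_ofReal_iff_toReal_le (measure_ne_top μ _) hint_nonneg]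
            exact setIntegral_le_of_ce_le hm (w j).2.1 hhint (w j).2.2 hT
    have hmono : Monotone (fun n => Set.accumulate (fun k => (w k).1) n ∩ T) :=
      fun a b hab => Set.inter_subset_inter (Set.monotone_accumulate hab) subset_rfl
    have hIU : ⋃ n, (Set.accumulate (fun k => (w k).1) n ∩ T) = U ∩ T := by
      rw [← Set.iUnion_inter, Set.iUnion_accumulate]
    have hlim := tendsto_measure_iUnion_atTop (μ := μ) hmono
    rw [hIU] at hlim
    have hle : μ (U ∩ T) ≤ ENNReal.ofReal (∫ ω in T, h ω ∂μ) :=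
      le_of_tendsto hlim (Eventually.of_forall key)
    exact ENNReal.toReal_le_of_le_ofReal hint_nonneg hle
  refine ⟨⟨U, hPU⟩, ?_⟩
  intro C hCc
  show μ (C.1 \ U) = 0
  by_cases hex : ∃ n, μ (C.1 \ (w n).1) = 0
  · obtain ⟨n, hn⟩ := hex
    refine measure_mono_null ?_ hn
    rintro ω ⟨h1, h2⟩
    exact ⟨h1, fun hmem => h2 (Set.mem_iUnion.2 ⟨n, hmem⟩)⟩
  · push_neg at hex
    have hwC : ∀ n, μ ((w n).1 \ C.1) = 0 := by
      intro n
      rcases eq_or_ne C (w n) with he | hne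
      · rw [← he]; simp
      · rcases hc hCc (hw1 n) hne with hr | hr
        · exact absurd hr (hex n)
        · exact hr
    have hUC : μ (U \ C.1) = 0 := by
      refine measure_mono_null ?_ (measure_iUnion_null (s := fun n => (w n).1 \ C.1) hwC)
      rintro ω ⟨h1, h2⟩
      obtain ⟨n, hn⟩ := Set.mem_iUnion.1 h1
      exact Set.mem_iUnion.2 ⟨n, hn, h2⟩
    have h1 : v C ≤ sSup S := le_csSup hSbdd ⟨C, hCc, rfl⟩
    have h2 : sSup S ≤ (μ U).toReal := by
      refine le_of_tendsto hulim (Eventually.of_forall fun n => ?_)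
      rw [← hw2 n]
      exact ENNReal.toReal_mono (measure_ne_top μ U) (measure_mono (by rw [hU]; exact Set.subset_iUnion (fun k => (w k).1) n))
    have hCU : μ C.1 ≤ μ U :=
      (ENNReal.toReal_le_toReal (measure_ne_top _ _) (measure_ne_top _ _)).1 (h1.trans h2)
    have hUeq : μ (U ∩ C.1) = μ U := by
      have h3 := measure_inter_add_diff (μ := μ) U C.2.1
      rw [hUC, add_zero] at h3
      exact h3
    have h3 := measure_inter_add_diff (μ := μ) C.1 hUmeas
    rw [Set.inter_comm, hUeq] at h3
    have h4 : μ U + μ (C.1 \ U) ≤ μ U + 0 := by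
      rw [add_zero, h3]; exact hCU
    have h5 := (ENNReal.add_le_add_iff_left (measure_ne_top μ U)).1 h4
    exact le_antisymm h5 zero_le

end CondAtomlessAux

open CondAtomlessAux

/-- If `F₂` is atomless conditionally to `F₁`, then for every `F₁`-measurable
`h : Ω → [0,1]` there is `B_h ∈ F₂` with `E[1_{B_h} | F₁] = h` almost surely. -/
theorem stmt_8 {Ω : Type*} {m1 m2 : MeasurableSpace Ω} (hm : m1 ≤ m2)
    (μ : @Measure Ω m2) [IsProbabilityMeasure μ]
    (hca : CondAtomless m1 m2 μ)
    (h : Ω → ℝ) (hmeas : Measurable[m1] h) (hrange : ∀ ω, h ω ∈ Set.Icc (0 : ℝ) 1) :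
    ∃ B : Set Ω, MeasurableSet[m2] B ∧
      (μ[B.indicator (fun _ => (1 : ℝ)) | m1]) =ᵐ[μ] h := by
  classical
  have hhsm : StronglyMeasurable[m1] h := hmeas.stronglyMeasurable
  have hhm2 : Measurable[m2] h := hmeas.mono hm le_rfl
  have hhint : Integrable h μ := by
    refine (integrable_const (1 : ℝ)).mono' hhm2.aestronglyMeasurable ?_
    refine Eventually.of_forall fun ω => ?_
    rw [Real.norm_eq_abs, abs_le]
    exact ⟨by linarith [(hrange ω).1], (hrange ω).2⟩
  -- Zorn's lemma
  obtain ⟨M, hMmax⟩ :=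
    exists_maximal_of_chains_bounded (r := rel m1 μ h)
      (chain_bound hm hhsm hhint (fun ω => (hrange ω).1))
      (fun {a b c} => rel_trans)
  by_cases heq : ce m1 μ M.1 =ᵐ[μ] h
  · exact ⟨M.1, M.2.1, heq⟩
  exfalso
  have hfle : ce m1 μ M.1 ≤ᵐ[μ] h := M.2.2
  set Sn : ℕ → Set Ω := fun n => {ω | ce m1 μ M.1 ω + (1/2 : ℝ)^n ≤ h ω} with hSn
  have hSnmeas : ∀ n, MeasurableSet[m1] (Sn n) := fun n =>
    measurableSet_le ((stronglyMeasurable_condExp.measurable).add_const _) hmeas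
  have hSpos : ∃ n, μ (Sn n) ≠ 0 := by
    by_contra hno
    push_neg at hno
    apply heq
    have h1 : ∀ᵐ ω ∂μ, ω ∉ ⋃ n, Sn n := by
      rw [ae_iff]
      refine measure_mono_null ?_ (measure_iUnion_null hno)
      intro ω hω
      exact not_not.1 hω
    filter_upwards [h1, hfle] with ω hω hωle
    by_contra hne
    have hlt : ce m1 μ M.1 ω < h ω := lt_of_le_of_ne hωle hne
    obtain ⟨n, hn⟩ := exists_pow_lt_of_lt_one (sub_pos.2 hlt) (by norm_num : (1/2 : ℝ) < 1)
    refine hω (Set.mem_iUnion.2 ⟨n, ?_⟩)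
    show ce m1 μ M.1 ω + (1/2 : ℝ)^n ≤ h ω
    linarith
  obtain ⟨n, hSne0⟩ := hSpos
  have hAmeas : MeasurableSet[m2] M.1ᶜ := M.2.1.compl
  obtain ⟨B, hBmeas, hBA, hBae⟩ := split hm hca n M.1ᶜ hAmeas
  have hcompl := ce_compl hm (μ := μ) M.2.1
  have hAone := ce_le_one hm (μ := μ) hAmeas
  have hkey : ∀ᵐ ω ∂μ, ω ∈ Sn n → 0 < ce m1 μ B ω ∧ ce m1 μ B ω ≤ (1/2 : ℝ)^n := by
    filter_upwards [hcompl, hAone, hBae] with ω e1 e2 e3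
    intro hωS
    have hfh : ce m1 μ M.1 ω + (1/2 : ℝ)^n ≤ h ω := hωS
    have hp : (0 : ℝ) < (1/2)^n := by positivity
    have hA0 : 0 < ce m1 μ M.1ᶜ ω := by
      rw [e1]
      have := (hrange ω).2
      linarith
    obtain ⟨hB0, hBle⟩ := e3 hA0
    refine ⟨hB0, hBle.trans ?_⟩
    have e2' : ce m1 μ M.1ᶜ ω ≤ 1 := e2
    nlinarith
  set Bs : Set Ω := B ∩ Sn n with hBs
  have hBsmeas : MeasurableSet[m2] Bs := hBmeas.inter (hm _ (hSnmeas n))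
  have hdisjM : Disjoint M.1 Bs := by
    rw [Set.disjoint_left]
    intro ω hωM hωB
    exact hBA hωB.1 hωM
  have hceBs := ce_inter_m1 hm (μ := μ) hBmeas (hSnmeas n)
  have hMBs : MeasurableSet[m2] (M.1 ∪ Bs) ∧ ce m1 μ (M.1 ∪ Bs) ≤ᵐ[μ] h := by
    refine ⟨M.2.1.union hBsmeas, ?_⟩
    have h1 := ce_union hm (μ := μ) M.2.1 hBsmeas hdisjM
    filter_upwards [h1, hceBs, hkey, hfle] with ω e1 e2 e3 e4
    rw [e1, Pi.add_apply, e2]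
    by_cases hωS : ω ∈ Sn n
    · rw [Set.indicator_of_mem hωS]
      obtain ⟨-, hle⟩ := e3 hωS
      have hfh : ce m1 μ M.1 ω + (1/2 : ℝ)^n ≤ h ω := hωS
      linarith
    · rw [Set.indicator_of_notMem hωS, add_zero]
      exact e4
  have hrM : rel m1 μ h M ⟨M.1 ∪ Bs, hMBs⟩ := by
    show μ (M.1 \ (M.1 ∪ Bs)) = 0
    have he : M.1 \ (M.1 ∪ Bs) = ∅ := by
      ext ω
      simp only [Set.mem_diff, Set.mem_union, Set.mem_empty_iff_false, iff_false, not_and, not_not]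
      tauto
    rw [he, measure_empty]
  have hback : μ ((M.1 ∪ Bs) \ M.1) = 0 := hMmax _ hrM
  have hBs0 : μ Bs = 0 := by
    refine measure_mono_null ?_ hback
    intro ω hω
    exact ⟨Or.inr hω, fun hM => (Set.disjoint_left.1 hdisjM hM) hω⟩
  have hce0 := ce_null hm (μ := μ) hBs0
  have hfinal : ∀ᵐ ω ∂μ, ω ∉ Sn n := by
    filter_upwards [hce0, hceBs, hkey] with ω e0 e2 e3
    intro hωS
    obtain ⟨hpos, -⟩ := e3 hωS
    have hz : (Sn n).indicator (ce m1 μ B) ω = 0 := by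
      rw [← e2]; exact e0
    rw [Set.indicator_of_mem hωS] at hz
    exact absurd hz (ne_of_gt hpos)
  apply hSne0
  rw [ae_iff] at hfinal
  simpa using hfinal
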